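/- (Core of Lemma 3.2 of the paper: the normalizer of the Lagrangian ideal under the Poisson bracket.) Let k be a field of characteristic zero, n ≥ 1, and let B := MvPolynomial (Fin n ⊕ Fin n) k be the polynomial algebra in variables x_1,…,x_n (indexed by the left summand) and y_1,…,y_n (indexed by the right summand). Define the standard Poisson bracket on B by {f, g} := ∑_{i=1}^n (∂f/∂x_i · ∂g/∂y_i − ∂f/∂y_i · ∂g/∂x_i), where the partial derivatives are MvPolynomial.pderiv. Let I be the ideal of B generated by the variables y_1,…,y_n. Then for every f ∈ B, one has {f, a} ∈ I for all a ∈ I if and only if there exists a constant c ∈ k such that f − c·1 ∈ I. -/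

import Mathlib

open MvPolynomial

private lemma coeff_pderiv' {σ k : Type*} [CommSemiring k]
    (i : σ) (m : σ →₀ ℕ) (f : MvPolynomial σ k) :
    coeff m (pderiv i f) = ((m i : k) + 1) * coeff (m + Finsupp.single i 1) f := by
  classical
  induction f using MvPolynomial.induction_on' with
  | monomial s a =>
    rw [pderiv_monomial, coeff_monomial, coeff_monomial]
    split_ifs with h1 h2 h2
    · subst h2
      have hsi : ((m + Finsupp.single i 1 : _ →₀ ℕ)) i = m i + 1 := by simp
      rw [hsi]; push_cast; ring
    · by_cases hs : s i = 0
      · simp [hs]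
      · exfalso; apply h2
        rw [← h1, tsub_add_cancel_of_le]
        exact Finsupp.single_le_iff.mpr (Nat.one_le_iff_ne_zero.mpr hs)
    · exfalso; apply h1; subst h2; simp
    · ring
  | add p q hp hq => simp [hp, hq, mul_add]

private lemma pderiv_inl_mem_span {k : Type*} [CommRing k] {n : ℕ}
    {g : MvPolynomial (Fin n ⊕ Fin n) k}
    (hg : g ∈ Ideal.span (Set.range fun i : Fin n =>
        (MvPolynomial.X (Sum.inr i) : MvPolynomial (Fin n ⊕ Fin n) k))) (j : Fin n) :
    pderiv (Sum.inl j) g ∈ Ideal.span (Set.range fun i : Fin n =>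
        (MvPolynomial.X (Sum.inr i) : MvPolynomial (Fin n ⊕ Fin n) k)) := by
  refine Submodule.span_induction ?_ ?_ ?_ ?_ hg
  · rintro x ⟨i, rfl⟩
    rw [pderiv_X_of_ne (by simp)]
    exact zero_mem _
  · simp
  · intro x y hx hy px py
    rw [map_add]; exact add_mem px py
  · intro r x hx px
    rw [smul_eq_mul, pderiv_mul]
    exact add_mem (Ideal.mul_mem_left _ _ hx) (Ideal.mul_mem_left _ _ px)

private lemma key_const {k : Type*} [Field k] [CharZero k] {n : ℕ}
    (f : MvPolynomial (Fin n ⊕ Fin n) k)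
    (hd : ∀ j : Fin n, pderiv (Sum.inl j) f ∈ Ideal.span (Set.range fun i : Fin n =>
        (MvPolynomial.X (Sum.inr i) : MvPolynomial (Fin n ⊕ Fin n) k))) :
    f - C (coeff 0 f) ∈ Ideal.span (Set.range fun i : Fin n =>
        (MvPolynomial.X (Sum.inr i) : MvPolynomial (Fin n ⊕ Fin n) k)) := by
  classical
  have hrange : (Set.range fun i : Fin n =>
      (MvPolynomial.X (Sum.inr i) : MvPolynomial (Fin n ⊕ Fin n) k))
      = MvPolynomial.X '' Set.range Sum.inr := by
    rw [← Set.range_comp]; rfl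
  rw [hrange, mem_ideal_span_X_image]
  intro m hm
  by_contra hc
  push_neg at hc
  have hm0 : coeff m (f - C (coeff 0 f)) ≠ 0 := mem_support_iff.mp hm
  have hmne : m ≠ 0 := by rintro rfl; simp at hm0
  obtain ⟨v, hv⟩ := Finsupp.ne_iff.mp hmne
  simp only [Finsupp.coe_zero, Pi.zero_apply] at hv
  obtain (j | i) := v
  · have hcC : coeff m (C (coeff 0 f) : MvPolynomial (Fin n ⊕ Fin n) k) = 0 := by
      rw [coeff_C, if_neg]; exact fun h => hmne h.symm
    have hcf : coeff m f ≠ 0 := by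
      intro h; apply hm0; rw [coeff_sub, h, hcC, sub_zero]
    have hle : Finsupp.single (Sum.inl j) 1 ≤ m :=
      Finsupp.single_le_iff.mpr (Nat.one_le_iff_ne_zero.mpr hv)
    have hcoef : coeff (m - Finsupp.single (Sum.inl j) 1) (pderiv (Sum.inl j) f) ≠ 0 := by
      rw [coeff_pderiv', tsub_add_cancel_of_le hle]
      exact mul_ne_zero (Nat.cast_add_one_ne_zero _) hcf
    have hdj := hd j
    rw [hrange, mem_ideal_span_X_image] at hdj
    obtain ⟨w, ⟨i', rfl⟩, hi⟩ := hdj _ (mem_support_iff.mpr hcoef)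
    apply hi
    rw [Finsupp.tsub_apply]
    simp [hc (Sum.inr i') ⟨i', rfl⟩]
  · exact hv (hc (Sum.inr i) ⟨i, rfl⟩)

/-- Core of Lemma 3.2 of the paper: in the polynomial Poisson algebra
`B = k[x₁,…,xₙ,y₁,…,yₙ]` with the standard bracket
`{f, g} = ∑ᵢ (∂f/∂xᵢ·∂g/∂yᵢ − ∂f/∂yᵢ·∂g/∂xᵢ)`, a polynomial `f` normalizes the ideal
`I = (y₁,…,yₙ)` (i.e. `{f, I} ⊆ I`) iff `f` is congruent to a constant modulo `I`. -/
theorem poisson_normalizer_of_lagrangian_ideal (k : Type*) [Field k] [CharZero k]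
    (n : ℕ) (hn : 1 ≤ n) (f : MvPolynomial (Fin n ⊕ Fin n) k) :
    (∀ a ∈ Ideal.span (Set.range fun i : Fin n =>
        (MvPolynomial.X (Sum.inr i) : MvPolynomial (Fin n ⊕ Fin n) k)),
      (∑ i : Fin n,
          (MvPolynomial.pderiv (Sum.inl i) f * MvPolynomial.pderiv (Sum.inr i) a -
            MvPolynomial.pderiv (Sum.inr i) f * MvPolynomial.pderiv (Sum.inl i) a)) ∈
        Ideal.span (Set.range fun i : Fin n =>
          (MvPolynomial.X (Sum.inr i) : MvPolynomial (Fin n ⊕ Fin n) k))) ↔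
    ∃ c : k, f - MvPolynomial.C c ∈ Ideal.span (Set.range fun i : Fin n =>
        (MvPolynomial.X (Sum.inr i) : MvPolynomial (Fin n ⊕ Fin n) k)) := by
  classical
  set I := Ideal.span (Set.range fun i : Fin n =>
      (MvPolynomial.X (Sum.inr i) : MvPolynomial (Fin n ⊕ Fin n) k)) with hI
  constructor
  · intro h
    have hd : ∀ j : Fin n, pderiv (Sum.inl j) f ∈ I := by
      intro j
      have hb := h (X (Sum.inr j)) (Ideal.subset_span ⟨j, rfl⟩)
      have hsum : (∑ i : Fin n,
          (pderiv (Sum.inl i) f * pderiv (Sum.inr i) (X (Sum.inr j) :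
              MvPolynomial (Fin n ⊕ Fin n) k) -
            pderiv (Sum.inr i) f * pderiv (Sum.inl i) (X (Sum.inr j) :
              MvPolynomial (Fin n ⊕ Fin n) k)))
          = pderiv (Sum.inl j) f := by
        rw [Finset.sum_eq_single j]
        · rw [pderiv_X_self, pderiv_X_of_ne (by simp)]; ring
        · intro b _ hb'
          rw [pderiv_X_of_ne (by simpa using hb'.symm), pderiv_X_of_ne (by simp)]
          ring
        · intro h'; exact absurd (Finset.mem_univ j) h'
      rwa [hsum] at hb
    exact ⟨coeff 0 f, key_const f hd⟩
  · rintro ⟨c, hfc⟩ a ha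
    have hpf : ∀ i : Fin n ⊕ Fin n, pderiv i f = pderiv i (f - C c) := by
      intro i; rw [map_sub, pderiv_C, sub_zero]
    set g := f - C c with hg
    simp only [hpf]
    refine Submodule.span_induction ?_ ?_ ?_ ?_ ha
    · rintro x ⟨j, rfl⟩
      have hsum : (∑ i : Fin n,
          (pderiv (Sum.inl i) g * pderiv (Sum.inr i) (X (Sum.inr j) :
              MvPolynomial (Fin n ⊕ Fin n) k) -
            pderiv (Sum.inr i) g * pderiv (Sum.inl i) (X (Sum.inr j) :
              MvPolynomial (Fin n ⊕ Fin n) k)))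
          = pderiv (Sum.inl j) g := by
        rw [Finset.sum_eq_single j]
        · rw [pderiv_X_self, pderiv_X_of_ne (by simp)]; ring
        · intro b _ hb'
          rw [pderiv_X_of_ne (by simpa using hb'.symm), pderiv_X_of_ne (by simp)]
          ring
        · intro h'; exact absurd (Finset.mem_univ j) h'
      rw [hsum]
      exact pderiv_inl_mem_span hfc j
    · simp
    · intro x y hx hy px py
      have hsum : (∑ i : Fin n,
          (pderiv (Sum.inl i) g * pderiv (Sum.inr i) (x + y) -
            pderiv (Sum.inr i) g * pderiv (Sum.inl i) (x + y)))
          = (∑ i : Fin n, (pderiv (Sum.inl i) g * pderiv (Sum.inr i) x -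
              pderiv (Sum.inr i) g * pderiv (Sum.inl i) x))
            + (∑ i : Fin n, (pderiv (Sum.inl i) g * pderiv (Sum.inr i) y -
              pderiv (Sum.inr i) g * pderiv (Sum.inl i) y)) := by
        rw [← Finset.sum_add_distrib]
        refine Finset.sum_congr rfl fun i _ => ?_
        rw [map_add, map_add]; ring
      rw [hsum]
      exact add_mem px py
    · intro r x hx px
      have hsum : (∑ i : Fin n,
          (pderiv (Sum.inl i) g * pderiv (Sum.inr i) (r • x) -
            pderiv (Sum.inr i) g * pderiv (Sum.inl i) (r • x)))
          = r * (∑ i : Fin n, (pderiv (Sum.inl i) g * pderiv (Sum.inr i) x -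
              pderiv (Sum.inr i) g * pderiv (Sum.inl i) x))
            + x * (∑ i : Fin n, (pderiv (Sum.inl i) g * pderiv (Sum.inr i) r -
              pderiv (Sum.inr i) g * pderiv (Sum.inl i) r)) := by
        rw [Finset.mul_sum, Finset.mul_sum, ← Finset.sum_add_distrib]
        refine Finset.sum_congr rfl fun i _ => ?_
        rw [smul_eq_mul, pderiv_mul, pderiv_mul]; ring
      rw [hsum]
      exact add_mem (Ideal.mul_mem_left _ _ px) (Ideal.mul_mem_right _ _ hx)
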